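/- For every z ∈ K with 1 + β·z ≠ 0 and z ≠ x_i for all i, one has (1/(1+βz)) · ∏_{i=1}^n (z ⊖ w_i)/(z ⊖ x_i) = 1/(1+βz) + Σ_{i=1}^n [(x_i ⊖ w_i)/(z − x_i)] · ∏_{j≠i} (x_i ⊖ w_j)/(x_i ⊖ x_j). -/

import Mathlib

open Polynomial Finset

lemma res_key {K : Type*} [Field K] (β : K) (n : ℕ) (x w : Fin n → K)
    (hx : Function.Injective x) (hxu : ∀ i, 1 + β * x i ≠ 0) (hwu : ∀ i, 1 + β * w i ≠ 0)
    (r : Fin n → K)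
    (hr : ∀ i, r i = ((x i - w i) / (1 + β * w i)) *
      ∏ j ∈ Finset.univ.erase i,
        (((x i - w j) / (1 + β * w j)) / ((x i - x j) / (1 + β * x j)))) (k : Fin n) :
    (∏ i, (1 + β * x i) / (1 + β * w i)) * ∏ i, (x k - w i)
      = (1 + β * x k) * (r k * ∏ j ∈ Finset.univ.erase k, (x k - x j)) := by
  have h1 : r k * ∏ j ∈ Finset.univ.erase k, (x k - x j)
      = ((x k - w k) / (1 + β * w k)) *
        ∏ j ∈ Finset.univ.erase k, ((x k - w j) * (1 + β * x j) / (1 + β * w j)) := by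
    rw [hr k, mul_assoc, ← Finset.prod_mul_distrib]
    congr 1
    refine Finset.prod_congr rfl fun j hj => ?_
    have hjk : x k - x j ≠ 0 := sub_ne_zero.mpr (fun h => (Finset.mem_erase.mp hj).1 (hx h).symm)
    rw [div_div_eq_mul_div, div_mul_cancel₀ _ hjk, div_mul_eq_mul_div]
  have h2 : ∀ j ∈ Finset.univ.erase k,
      (1 + β * x j) / (1 + β * w j) * (x k - w j)
        = (x k - w j) * (1 + β * x j) / (1 + β * w j) := fun j _ => by ring
  rw [h1,
    ← Finset.mul_prod_erase Finset.univ (fun i => (1 + β * x i) / (1 + β * w i))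
      (Finset.mem_univ k),
    ← Finset.mul_prod_erase Finset.univ (fun i => x k - w i) (Finset.mem_univ k),
    mul_mul_mul_comm, ← Finset.prod_mul_distrib, Finset.prod_congr rfl h2]
  ring

lemma poly_key {K : Type*} [Field K] (β : K) (n : ℕ) (hn : 1 ≤ n) (x w : Fin n → K)
    (hx : Function.Injective x) (hxu : ∀ i, 1 + β * x i ≠ 0) (hwu : ∀ i, 1 + β * w i ≠ 0)
    (r : Fin n → K)
    (hr : ∀ i, r i = ((x i - w i) / (1 + β * w i)) *
      ∏ j ∈ Finset.univ.erase i,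
        (((x i - w j) / (1 + β * w j)) / ((x i - x j) / (1 + β * x j)))) (z : K) :
    (∏ i, (1 + β * x i) / (1 + β * w i)) * ∏ i, (z - w i)
      = ∏ i, (z - x i) + (1 + β * z) *
          ∑ i, r i * ∏ j ∈ Finset.univ.erase i, (z - x j) := by
  classical
  set C0 : K := ∏ i, (1 + β * x i) / (1 + β * w i) with hC0
  set P : K[X] := C C0 * ∏ i, (X - C (w i)) with hP
  set A : K[X] := ∏ i, (X - C (x i)) with hA
  set S : K[X] := ∑ i, C (r i) * ∏ j ∈ Finset.univ.erase i, (X - C (x j)) with hS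
  set E : K[X] := P - (A + (1 + C β * X) * S) with hE
  suffices hE0 : E = 0 by
    have := congrArg (Polynomial.eval z) hE0
    simp only [hE, hP, hA, hS, eval_sub, eval_add, eval_mul, eval_one, eval_C, eval_X,
      eval_prod, eval_finset_sum, eval_zero] at this
    linear_combination this
  have hevalx : ∀ k, E.eval (x k) = 0 := by
    intro k
    have hA0 : A.eval (x k) = 0 := by
      simp only [hA, eval_prod, eval_sub, eval_X, eval_C]
      exact Finset.prod_eq_zero (Finset.mem_univ k) (sub_self _)
    have hS0 : S.eval (x k) = r k * ∏ j ∈ Finset.univ.erase k, (x k - x j) := by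
      simp only [hS, eval_finset_sum, eval_mul, eval_C, eval_prod, eval_sub, eval_X]
      refine Finset.sum_eq_single k (fun i _ hik => ?_) (by simp)
      have hk : (k : Fin n) ∈ Finset.univ.erase i :=
        Finset.mem_erase.mpr ⟨fun h => hik h.symm, Finset.mem_univ k⟩
      rw [Finset.prod_eq_zero hk (sub_self (x k)), mul_zero]
    simp only [hE, eval_sub, eval_add, eval_mul, eval_one, eval_C, eval_X, hA0, hS0]
    rw [sub_eq_zero, zero_add]
    have := res_key β n x w hx hxu hwu r hr k
    simp only [hP, eval_mul, eval_C, eval_prod, eval_sub, eval_X, ← hC0]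
    rw [this]
  have hdegProd : ∀ (v : Fin n → K), (∏ i, (X - C (v i)) : K[X]).natDegree = n := by
    intro v
    rw [Polynomial.natDegree_prod _ _ (fun i _ => X_sub_C_ne_zero (v i))]
    simp
  have hdegS : S.natDegree ≤ n - 1 := by
    refine Polynomial.natDegree_sum_le_of_forall_le _ _ fun i _ => ?_
    refine le_trans (Polynomial.natDegree_mul_le) ?_
    rw [Polynomial.natDegree_C]
    refine le_trans (Nat.zero_add _).le ?_
    refine le_trans (Polynomial.natDegree_prod_le _ _) ?_
    refine le_trans (Finset.sum_le_card_nsmul _ _ 1 fun j _ => (Polynomial.natDegree_X_sub_C (x j)).le) ?_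
    rw [smul_eq_mul, mul_one, Finset.card_erase_of_mem (Finset.mem_univ i), Finset.card_univ,
      Fintype.card_fin]
  have hdegE : E.natDegree ≤ n := by
    refine le_trans (Polynomial.natDegree_sub_le _ _) (max_le ?_ ?_)
    · refine le_trans (Polynomial.natDegree_mul_le) ?_
      rw [Polynomial.natDegree_C, hdegProd]; simp
    · refine le_trans (Polynomial.natDegree_add_le _ _) (max_le ?_ ?_)
      · rw [hA, hdegProd]
      · refine le_trans (Polynomial.natDegree_mul_le) ?_
        have h1 : (1 + C β * X : K[X]).natDegree ≤ 1 := by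
          refine le_trans (Polynomial.natDegree_add_le _ _) (max_le (by simp) ?_)
          refine le_trans (Polynomial.natDegree_mul_le) (by simp)
        omega
  by_cases hβ : β = 0
  · subst hβ
    have hC01 : C0 = 1 := by simp [hC0]
    have hP' : P = ∏ i, (X - C (w i)) := by rw [hP, hC01, map_one, one_mul]
    have hE' : E = ((∏ i, (X - C (w i))) - A) - S := by
      rw [hE, hP', map_zero]; ring
    have hmW : ((∏ i, (X - C (w i))) : K[X]).Monic :=
      monic_prod_of_monic _ _ fun i _ => monic_X_sub_C _
    have hmA : A.Monic := monic_prod_of_monic _ _ fun i _ => monic_X_sub_C _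
    have hdW : ((∏ i, (X - C (w i))) : K[X]).natDegree = n := hdegProd w
    have hdA : A.natDegree = n := by rw [hA]; exact hdegProd x
    have hdegPA : ((∏ i, (X - C (w i))) - A : K[X]).natDegree < n := by
      by_cases h0 : ((∏ i, (X - C (w i))) - A : K[X]) = 0
      · rw [h0]; simpa using (show 0 < n by omega)
      · rw [Polynomial.natDegree_lt_iff_degree_lt h0]
        have hd : ((∏ i, (X - C (w i))) : K[X]).degree = A.degree := by
          rw [Polynomial.degree_eq_natDegree hmW.ne_zero,
            Polynomial.degree_eq_natDegree hmA.ne_zero, hdW, hdA]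
        have h2 := Polynomial.degree_sub_lt hd hmW.ne_zero
          (by rw [hmW.leadingCoeff, hmA.leadingCoeff])
        rwa [Polynomial.degree_eq_natDegree hmW.ne_zero, hdW] at h2
    have hdegE' : E.natDegree < n := by
      rw [hE']
      refine lt_of_le_of_lt (Polynomial.natDegree_sub_le _ _) ?_
      exact max_lt hdegPA (lt_of_le_of_lt hdegS (by omega))
    refine Polynomial.eq_zero_of_natDegree_lt_card_of_eval_eq_zero' E (Finset.univ.image x)
      (fun i hi => ?_) ?_
    · obtain ⟨k, -, rfl⟩ := Finset.mem_image.mp hi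
      exact hevalx k
    · rwa [Finset.card_image_of_injective _ hx, Finset.card_univ, Fintype.card_fin]
  · set y : K := -(1 / β) with hy
    have hy0 : 1 + β * y = 0 := by rw [hy]; field_simp; ring
    have hyx : y ∉ Finset.univ.image x := by
      intro h
      obtain ⟨k, -, hk⟩ := Finset.mem_image.mp h
      exact hxu k (by rw [hk]; exact hy0)
    have hevaly : E.eval y = 0 := by
      have hfac : ∀ i, (1 + β * x i) / (1 + β * w i) * (y - w i) = y - x i := by
        intro i
        rw [div_mul_eq_mul_div, div_eq_iff (hwu i)]
        linear_combination (x i - w i) * hy0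
      have hmain : C0 * ∏ i, (y - w i) = ∏ i, (y - x i) := by
        rw [hC0, ← Finset.prod_mul_distrib]
        exact Finset.prod_congr rfl fun i _ => hfac i
      have hEy : E.eval y = C0 * ∏ i, (y - w i)
          - (∏ i, (y - x i) + (1 + β * y) * S.eval y) := by
        simp [hE, hP, hA, eval_prod]
      rw [hEy, hy0, hmain]; ring
    refine Polynomial.eq_zero_of_natDegree_lt_card_of_eval_eq_zero' E
      (insert y (Finset.univ.image x)) (fun i hi => ?_) ?_
    · rcases Finset.mem_insert.mp hi with rfl | hi
      · exact hevaly
      · obtain ⟨k, -, rfl⟩ := Finset.mem_image.mp hi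
        exact hevalx k
    · rw [Finset.card_insert_of_notMem hyx, Finset.card_image_of_injective _ hx,
        Finset.card_univ, Fintype.card_fin]
      omega

/-- connective K-theory case of `N_F(z) = 1/(1+βz)`.
With `a ⊖ b := (a - b)/(1 + β b)`, for every `z` with `1 + βz ≠ 0` and `z ≠ xᵢ`:
`(1/(1+βz)) ∏ᵢ (z ⊖ wᵢ)/(z ⊖ xᵢ) = 1/(1+βz) + Σᵢ (xᵢ ⊖ wᵢ)/(z - xᵢ) ∏_{j≠i} (xᵢ ⊖ wⱼ)/(xᵢ ⊖ xⱼ)`. -/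
theorem stmt1 {K : Type*} [Field K] (β : K) (n : ℕ) (hn : 1 ≤ n)
    (x w : Fin n → K)
    (hx : Function.Injective x)
    (hxu : ∀ i, 1 + β * x i ≠ 0)
    (hwu : ∀ i, 1 + β * w i ≠ 0)
    (ominus : K → K → K)
    (hominus : ∀ a b, ominus a b = (a - b) / (1 + β * b))
    (z : K) (hz : 1 + β * z ≠ 0) (hzx : ∀ i, z ≠ x i) :
    (1 / (1 + β * z)) * ∏ i, ominus z (w i) / ominus z (x i)
      = 1 / (1 + β * z)
        + ∑ i, (ominus (x i) (w i) / (z - x i))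
            * ∏ j ∈ Finset.univ.erase i, ominus (x i) (w j) / ominus (x i) (x j) := by
  classical
  set r : Fin n → K := fun i =>
    ominus (x i) (w i) * ∏ j ∈ Finset.univ.erase i, ominus (x i) (w j) / ominus (x i) (x j)
    with hrdef
  have hr : ∀ i, r i = ((x i - w i) / (1 + β * w i)) *
      ∏ j ∈ Finset.univ.erase i,
        (((x i - w j) / (1 + β * w j)) / ((x i - x j) / (1 + β * x j))) := by
    intro i
    simp only [hrdef, hominus]
  have key := poly_key β n hn x w hx hxu hwu r hr z
  have hzxne : ∀ i, z - x i ≠ 0 := fun i => sub_ne_zero.mpr (hzx i)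
  have hPzx : (∏ i, (z - x i)) ≠ 0 := Finset.prod_ne_zero_iff.mpr fun i _ => hzxne i
  have hPw : (∏ i, (1 + β * w i)) ≠ 0 := Finset.prod_ne_zero_iff.mpr fun i _ => hwu i
  have habcd : ∀ a b c d : K, (a / b) / (c / d) = (d / b) * (a / c) := by
    intros a b c d
    simp only [div_eq_mul_inv, mul_inv_rev, inv_inv]
    ring
  -- rewrite the product on the left
  have hprodL : (∏ i, ominus z (w i) / ominus z (x i))
      = ((∏ i, (1 + β * x i)) / (∏ i, (1 + β * w i)))
        * ((∏ i, (z - w i)) / (∏ i, (z - x i))) := by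
    simp only [hominus]
    rw [← Finset.prod_div_distrib, ← Finset.prod_div_distrib, ← Finset.prod_mul_distrib]
    exact Finset.prod_congr rfl fun i _ => habcd _ _ _ _
  -- rewrite the sum on the right
  have hsum : (∑ i, (ominus (x i) (w i) / (z - x i))
        * ∏ j ∈ Finset.univ.erase i, ominus (x i) (w j) / ominus (x i) (x j))
      = (∑ i, r i * ∏ j ∈ Finset.univ.erase i, (z - x j)) / ∏ j, (z - x j) := by
    rw [Finset.sum_div]
    refine Finset.sum_congr rfl fun i _ => ?_
    have hpe : (∏ j ∈ Finset.univ.erase i, (z - x j)) ≠ 0 :=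
      Finset.prod_ne_zero_iff.mpr fun j _ => hzxne j
    simp only [hrdef]
    rw [← Finset.mul_prod_erase Finset.univ (fun j => z - x j) (Finset.mem_univ i),
      mul_div_mul_right _ _ hpe, div_mul_eq_mul_div]
  have hC0 : (∏ i, (1 + β * x i) / (1 + β * w i))
      = (∏ i, (1 + β * x i)) / (∏ i, (1 + β * w i)) := Finset.prod_div_distrib _ _
  rw [hprodL, hsum]
  rw [hC0] at key
  rw [← mul_div_assoc, key]
  field_simp
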